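/- Let G be a graph with adjacency matrix A, largest eigenvalue μ_1, Laplacian eigenvalue θ_1 = λ_max(D−A), and signless Laplacian eigenvalue δ_1 = λ_max(D+A). If G admits a quantum c-coloring, then c ≥ 1 + μ_1/(μ_1 − δ_1 + θ_1); hence χ_q(G) ≥ 1 + μ_1/(μ_1 − δ_1 + θ_1). -/

import Mathlib

open Matrix BigOperators

section KolotilinaAux

/-! ### Generic helper lemmas -/

lemma kol_ray_ub {n : ℕ} (M : Matrix (Fin n) (Fin n) ℝ) (hM : M.IsHermitian) (x : Fin n → ℝ) :
    x ⬝ᵥ M *ᵥ x ≤ (⨆ i, hM.eigenvalues i) * (x ⬝ᵥ x) := by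
  rcases Nat.eq_zero_or_pos n with h0 | hn
  · subst h0; simp [dotProduct, mulVec]
  have hne : Nonempty (Fin n) := ⟨⟨0, hn⟩⟩
  set U : Matrix (Fin n) (Fin n) ℝ := (hM.eigenvectorUnitary : Matrix (Fin n) (Fin n) ℝ) with hU
  have hUU : U * star U = 1 := Matrix.mem_unitaryGroup_iff.mp hM.eigenvectorUnitary.2
  set w : Fin n → ℝ := star U *ᵥ x with hw
  have hvm : Matrix.vecMul x U = w := by
    ext i
    simp [Matrix.vecMul, Matrix.mulVec, hw, dotProduct, star, mul_comm]
  have key : x ⬝ᵥ M *ᵥ x = ∑ i, hM.eigenvalues i * (w i * w i) := by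
    conv_lhs => rw [hM.spectral_theorem, Unitary.conjStarAlgAut_apply]
    rw [← Matrix.mulVec_mulVec, ← Matrix.mulVec_mulVec, Matrix.dotProduct_mulVec (R := ℝ), hvm]
    simp [dotProduct, Matrix.mulVec_diagonal, mul_assoc, mul_comm, mul_left_comm]
    rfl
  have hnorm : ∑ i, w i * w i = x ⬝ᵥ x := by
    have h2 : x ⬝ᵥ (U * star U) *ᵥ x = w ⬝ᵥ w := by
      rw [← Matrix.mulVec_mulVec, Matrix.dotProduct_mulVec (R := ℝ), hvm]
    simpa [hUU, dotProduct] using h2.symm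
  have hbd : ∀ i, hM.eigenvalues i ≤ ⨆ j, hM.eigenvalues j := fun i =>
    le_ciSup (Set.Finite.bddAbove (Set.finite_range _)) i
  calc x ⬝ᵥ M *ᵥ x = ∑ i, hM.eigenvalues i * (w i * w i) := key
    _ ≤ ∑ i, (⨆ j, hM.eigenvalues j) * (w i * w i) := by
        apply Finset.sum_le_sum
        intro i _
        exact mul_le_mul_of_nonneg_right (hbd i) (mul_self_nonneg _)
    _ = (⨆ j, hM.eigenvalues j) * (x ⬝ᵥ x) := by rw [← Finset.mul_sum, hnorm]

lemma kol_ray_ev {n : ℕ} (hn : 0 < n) (M : Matrix (Fin n) (Fin n) ℝ) (hM : M.IsHermitian) :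
    ∃ x : Fin n → ℝ, x ⬝ᵥ x = 1 ∧ M *ᵥ x = (⨆ i, hM.eigenvalues i) • x := by
  have hne : Nonempty (Fin n) := ⟨⟨0, hn⟩⟩
  obtain ⟨i₀, hi₀⟩ := Finite.exists_max hM.eigenvalues
  have hsup : (⨆ i, hM.eigenvalues i) = hM.eigenvalues i₀ :=
    le_antisymm (ciSup_le hi₀) (le_ciSup (Set.Finite.bddAbove (Set.finite_range _)) i₀)
  refine ⟨⇑(hM.eigenvectorBasis i₀), ?_, ?_⟩
  · have h1 : ‖hM.eigenvectorBasis i₀‖ = 1 := hM.eigenvectorBasis.orthonormal.1 i₀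
    rw [EuclideanSpace.norm_eq] at h1
    have h2 : ∑ i, (hM.eigenvectorBasis i₀ i) ^ 2 = 1 := by
      have := congrArg (· ^ 2) h1
      simpa [Real.sq_sqrt (Finset.sum_nonneg fun i _ => sq_nonneg _)] using this
    simpa [dotProduct, sq] using h2
  · rw [hsup]
    exact hM.mulVec_eigenvectorBasis i₀

variable {m : Type*} [Fintype m] [DecidableEq m]

lemma kol_dp_sum_left {c : ℕ} (f : Fin c → m → ℂ) (v : m → ℂ) :
    (∑ k, f k) ⬝ᵥ v = ∑ k, f k ⬝ᵥ v := by
  simp only [dotProduct, Finset.sum_apply, Finset.sum_mul]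
  exact Finset.sum_comm

lemma kol_dp_sum_right {c : ℕ} (v : m → ℂ) (f : Fin c → m → ℂ) :
    v ⬝ᵥ (∑ k, f k) = ∑ k, v ⬝ᵥ f k := by
  simp only [dotProduct, Finset.sum_apply, Finset.mul_sum]
  exact Finset.sum_comm

lemma kol_re_dp_nonneg (w : m → ℂ) : 0 ≤ (star w ⬝ᵥ w).re := by
  rw [dotProduct, Complex.re_sum]
  apply Finset.sum_nonneg
  intro i _
  have h : star w i * w i = (Complex.normSq (w i) : ℂ) := by
    simp [Complex.normSq_eq_conj_mul_self, Complex.star_def]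
  rw [h, Complex.ofReal_re]
  exact Complex.normSq_nonneg _

lemma kol_re_dp_symm (u v : m → ℂ) : (star u ⬝ᵥ v).re = (star v ⬝ᵥ u).re := by
  conv_rhs => rw [Matrix.star_dotProduct]
  rw [Complex.star_def, Complex.conj_re]

lemma kol_re_dp_pair (u v : m → ℂ) :
    2 * (star u ⬝ᵥ v).re ≤ (star u ⬝ᵥ u).re + (star v ⬝ᵥ v).re := by
  have h := kol_re_dp_nonneg (u - v)
  have hexp : star (u - v) ⬝ᵥ (u - v)
      = star u ⬝ᵥ u - star u ⬝ᵥ v - star v ⬝ᵥ u + star v ⬝ᵥ v := by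
    rw [star_sub]
    simp [sub_dotProduct, dotProduct_sub]
    ring
  rw [hexp] at h
  simp only [Complex.add_re, Complex.sub_re] at h
  have := kol_re_dp_symm u v
  linarith

lemma kol_cs_sum {c : ℕ} (s : Fin c → m → ℂ) :
    ((star (∑ k, s k)) ⬝ᵥ (∑ k, s k)).re ≤ c * ∑ k, (star (s k) ⬝ᵥ s k).re := by
  have hexp : (star (∑ k, s k)) ⬝ᵥ (∑ k, s k) = ∑ k, ∑ l, star (s k) ⬝ᵥ s l := by
    rw [star_sum, kol_dp_sum_left]
    exact Finset.sum_congr rfl fun k _ => kol_dp_sum_right _ _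
  rw [hexp, Complex.re_sum]
  calc ∑ k, (∑ l, star (s k) ⬝ᵥ s l).re
      = ∑ k, ∑ l, (star (s k) ⬝ᵥ s l).re :=
        Finset.sum_congr rfl fun k _ => Complex.re_sum _ _
    _ ≤ ∑ k, ∑ l, ((star (s k) ⬝ᵥ s k).re + (star (s l) ⬝ᵥ s l).re) / 2 := by
        apply Finset.sum_le_sum; intro k _
        apply Finset.sum_le_sum; intro l _
        linarith [kol_re_dp_pair (s k) (s l)]
    _ = c * ∑ k, (star (s k) ⬝ᵥ s k).re := by
        simp only [add_div, Finset.sum_add_distrib, Finset.sum_const, Finset.card_univ,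
          Fintype.card_fin, nsmul_eq_mul, ← Finset.sum_div, Finset.mul_sum]
        rw [← Finset.mul_sum, ← Finset.mul_sum, ← Finset.sum_div]
        ring

lemma kol_sum_mulVec {c : ℕ} (M : Fin c → Matrix m m ℂ) (y : m → ℂ) :
    (∑ k, M k) *ᵥ y = ∑ k, M k *ᵥ y := by
  ext i
  simp only [Matrix.mulVec, dotProduct, Matrix.sum_apply, Finset.sum_apply,
    Finset.sum_mul]
  exact Finset.sum_comm

lemma kol_qf_herm (M : Matrix m m ℂ) (y : m → ℂ) :
    star y ⬝ᵥ (Mᴴ * M) *ᵥ y = star (M *ᵥ y) ⬝ᵥ (M *ᵥ y) := by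
  rw [← Matrix.mulVec_mulVec, Matrix.dotProduct_mulVec, Matrix.star_mulVec]

/-- The key pinching inequality: for Hermitian `C k` summing to `1` and `X = Bᴴ B`
positive semidefinite, `⟨y, X y⟩ ≤ c ⟨y, Φ(X) y⟩` where `Φ` is the pinching map. -/
lemma kol_pinch {c : ℕ} (C : Fin c → Matrix m m ℂ) (hC1 : ∑ k, C k = 1)
    (hCh : ∀ k, (C k).IsHermitian) (B : Matrix m m ℂ) (y : m → ℂ) :
    (star y ⬝ᵥ (Bᴴ * B) *ᵥ y).re
      ≤ c * (star y ⬝ᵥ ((∑ k, C k * (Bᴴ * B) * C k) *ᵥ y)).re := by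
  set s : Fin c → m → ℂ := fun k => (B * C k) *ᵥ y with hs
  have hsum : ∑ k, s k = B *ᵥ y := by
    rw [← kol_sum_mulVec]
    rw [← Finset.mul_sum, hC1, mul_one]
  have h1 : ∀ k, star y ⬝ᵥ ((C k * (Bᴴ * B) * C k) *ᵥ y) = star (s k) ⬝ᵥ s k := by
    intro k
    have hfact : C k * (Bᴴ * B) * C k = (B * C k)ᴴ * (B * C k) := by
      rw [Matrix.conjTranspose_mul, (hCh k).eq]
      simp only [Matrix.mul_assoc]
    rw [hfact, kol_qf_herm]
  have h0 : star y ⬝ᵥ (Bᴴ * B) *ᵥ y = star (∑ k, s k) ⬝ᵥ (∑ k, s k) := by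
    rw [kol_qf_herm, hsum]
  have hR : star y ⬝ᵥ ((∑ k, C k * (Bᴴ * B) * C k) *ᵥ y) = ∑ k, star (s k) ⬝ᵥ s k := by
    rw [kol_sum_mulVec, kol_dp_sum_right]
    exact Finset.sum_congr rfl fun k _ => h1 k
  rw [h0, hR, Complex.re_sum]
  exact kol_cs_sum s

end KolotilinaAux

section KolotilinaLift

/-! ### The lift of real matrices to `ℂ^(n·d)` and block-diagonal projections -/

/-- Lift an `n × n` real matrix `S` to `ℂ^(n·d)` as `S ⊗ I_d`. -/
def LiftK {n : ℕ} (d : ℕ) (S : Matrix (Fin n) (Fin n) ℝ) :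
    Matrix (Fin n × Fin d) (Fin n × Fin d) ℂ :=
  Matrix.of fun p q => if p.2 = q.2 then (S p.1 q.1 : ℂ) else 0

/-- The block-diagonal matrix built from the projectors `P v k` (for fixed colour `k`). -/
def Cmat {n d c : ℕ} (P : Fin n → Fin c → Matrix (Fin d) (Fin d) ℂ) (k : Fin c) :
    Matrix (Fin n × Fin d) (Fin n × Fin d) ℂ :=
  Matrix.of fun p q => if p.1 = q.1 then P p.1 k p.2 q.2 else 0

variable {n d c : ℕ} {P : Fin n → Fin c → Matrix (Fin d) (Fin d) ℂ}

lemma liftK_mul (B : Matrix (Fin n) (Fin n) ℝ) :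
    LiftK d (Bᴴ * B) = (LiftK d B)ᴴ * LiftK d B := by
  ext p q
  simp only [LiftK, Matrix.mul_apply, Matrix.conjTranspose_apply, Matrix.of_apply,
    Fintype.sum_prod_type]
  by_cases h : p.2 = q.2
  · rw [if_pos h]
    have : ∀ r1 : Fin n, ∀ r2 : Fin d,
        star (if r2 = p.2 then (B r1 p.1 : ℂ) else 0) * (if r2 = q.2 then (B r1 q.1 : ℂ) else 0)
          = if r2 = p.2 then (B r1 p.1 : ℂ) * (B r1 q.1 : ℂ) else 0 := by
      intro r1 r2
      by_cases h2 : r2 = p.2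
      · rw [if_pos h2, if_pos (h ▸ h2), if_pos h2]
        simp [Complex.star_def, Complex.conj_ofReal]
      · rw [if_neg h2, if_neg (by rw [← h]; exact h2), if_neg h2]
        simp
    simp only [this, Finset.sum_ite_eq' Finset.univ p.2, Finset.mem_univ, if_true]
    push_cast
    simp
  · rw [if_neg h]
    symm
    apply Finset.sum_eq_zero
    intro r1 _
    apply Finset.sum_eq_zero
    intro r2 _
    by_cases h2 : r2 = p.2
    · subst h2
      simp [h]
    · simp [h2]

lemma lift_qf (S : Matrix (Fin n) (Fin n) ℝ) (x : Fin n → ℝ) (i₀ : Fin d) :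
    star (fun p : Fin n × Fin d => if p.2 = i₀ then (x p.1 : ℂ) else 0) ⬝ᵥ
      (LiftK d S *ᵥ fun p : Fin n × Fin d => if p.2 = i₀ then (x p.1 : ℂ) else 0)
      = ((x ⬝ᵥ S *ᵥ x : ℝ) : ℂ) := by
  simp only [dotProduct, Matrix.mulVec, LiftK, Matrix.of_apply, Pi.star_apply,
    Fintype.sum_prod_type]
  have inner : ∀ p1 : Fin n, ∀ p2 : Fin d,
      (∑ q1 : Fin n, ∑ q2 : Fin d,
        (if p2 = q2 then (S p1 q1 : ℂ) else 0) * (if q2 = i₀ then (x q1 : ℂ) else 0))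
      = if p2 = i₀ then ∑ q1 : Fin n, (S p1 q1 : ℂ) * (x q1 : ℂ) else 0 := by
    intro p1 p2
    have : ∀ q1 : Fin n, ∑ q2 : Fin d,
        (if p2 = q2 then (S p1 q1 : ℂ) else 0) * (if q2 = i₀ then (x q1 : ℂ) else 0)
        = if p2 = i₀ then (S p1 q1 : ℂ) * (x q1 : ℂ) else 0 := by
      intro q1
      rw [Finset.sum_eq_single p2]
      · by_cases h : p2 = i₀ <;> simp [h]
      · intro b _ hb
        rw [if_neg (fun hh => hb hh.symm), zero_mul]
      · intro h; exact absurd (Finset.mem_univ p2) h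
    rw [Finset.sum_congr rfl fun q1 _ => this q1]
    by_cases h : p2 = i₀ <;> simp [h]
  calc ∑ p1 : Fin n, ∑ p2 : Fin d, star (if p2 = i₀ then (x p1 : ℂ) else 0) *
          (∑ q1 : Fin n, ∑ q2 : Fin d,
            (if p2 = q2 then (S p1 q1 : ℂ) else 0) * (if q2 = i₀ then (x q1 : ℂ) else 0))
      = ∑ p1 : Fin n, (x p1 : ℂ) * ∑ q1 : Fin n, (S p1 q1 : ℂ) * (x q1 : ℂ) := by
        apply Finset.sum_congr rfl
        intro p1 _
        rw [Finset.sum_eq_single i₀]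
        · simp only [if_pos rfl, inner p1 i₀, if_pos rfl]
          congr 1
          simp [Complex.star_def, Complex.conj_ofReal]
        · intro b _ hb
          rw [inner p1 b, if_neg hb, if_neg hb, star_zero, zero_mul]
        · intro h; exact absurd (Finset.mem_univ i₀) h
    _ = ((x ⬝ᵥ S *ᵥ x : ℝ) : ℂ) := by
        push_cast [dotProduct, Matrix.mulVec]
        ring_nf

lemma Cmat_herm (hherm : ∀ v k, (P v k).IsHermitian) (k : Fin c) :
    (Cmat P k).IsHermitian := by
  ext p q
  simp only [Cmat, Matrix.conjTranspose_apply, Matrix.of_apply]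
  by_cases h : p.1 = q.1
  · rw [if_pos h.symm, if_pos h]
    rw [← h]
    simpa [Matrix.conjTranspose_apply] using congrFun (congrFun (hherm p.1 k).eq p.2) q.2
  · rw [if_neg (fun hh => h hh.symm), if_neg h, star_zero]

lemma Cmat_sum (hsum : ∀ v, ∑ k, P v k = 1) :
    ∑ k, Cmat P k = 1 := by
  ext p q
  simp only [Matrix.sum_apply, Cmat, Matrix.of_apply]
  by_cases h : p.1 = q.1
  · simp only [if_pos h]
    have := congrFun (congrFun (hsum p.1) p.2) q.2
    rw [Matrix.sum_apply] at this
    rw [this]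
    simp [Matrix.one_apply, Prod.ext_iff, h]
  · simp only [if_neg h, Finset.sum_const_zero]
    rw [Matrix.one_apply_ne (fun hh => h (congrArg Prod.fst hh))]

lemma Cmat_conj_lift (k : Fin c) (R : Matrix (Fin n) (Fin n) ℝ) (p q : Fin n × Fin d) :
    (Cmat P k * LiftK d R * Cmat P k) p q
      = (R p.1 q.1 : ℂ) * (P p.1 k * P q.1 k) p.2 q.2 := by
  rw [Matrix.mul_apply]
  have hstep : ∀ s : Fin n × Fin d, (Cmat P k * LiftK d R) p s
      = (R p.1 s.1 : ℂ) * P p.1 k p.2 s.2 := by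
    intro s
    rw [Matrix.mul_apply]
    simp only [Cmat, LiftK, Matrix.of_apply, Fintype.sum_prod_type]
    rw [Finset.sum_eq_single p.1]
    · simp only [if_pos rfl]
      rw [Finset.sum_eq_single s.2]
      · simp only [if_pos rfl, if_true]; ring
      · intro b _ hb; rw [if_neg hb, mul_zero]
      · intro h; exact absurd (Finset.mem_univ s.2) h
    · intro b _ hb
      apply Finset.sum_eq_zero
      intro r2 _
      rw [if_neg (fun hh => hb hh.symm), zero_mul]
    · intro h; exact absurd (Finset.mem_univ p.1) h
  calc ∑ s : Fin n × Fin d, (Cmat P k * LiftK d R) p s * Cmat P k s q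
      = ∑ s : Fin n × Fin d, ((R p.1 s.1 : ℂ) * P p.1 k p.2 s.2) *
          (if s.1 = q.1 then P s.1 k s.2 q.2 else 0) := by
        apply Finset.sum_congr rfl
        intro s _
        rw [hstep s]
        rfl
    _ = (R p.1 q.1 : ℂ) * (P p.1 k * P q.1 k) p.2 q.2 := by
        rw [Fintype.sum_prod_type]
        rw [Finset.sum_eq_single q.1]
        · simp only [if_pos rfl]
          rw [Matrix.mul_apply, Finset.mul_sum]
          apply Finset.sum_congr rfl
          intro s2 _
          simp only [if_pos rfl, if_true]
          ring
        · intro b _ hb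
          apply Finset.sum_eq_zero
          intro s2 _
          rw [if_neg hb, mul_zero]
        · intro h; exact absurd (Finset.mem_univ q.1) h

lemma Cmat_pinch (G : SimpleGraph (Fin n)) [DecidableRel G.Adj]
    (hidem : ∀ v k, P v k * P v k = P v k) (hsum : ∀ v, ∑ k, P v k = 1)
    (horth : ∀ v w, G.Adj v w → ∀ k, P v k * P w k = 0)
    (R : Matrix (Fin n) (Fin n) ℝ) (hR : ∀ v w, v ≠ w → ¬ G.Adj v w → R v w = 0) :
    ∑ k, Cmat P k * LiftK d R * Cmat P k = LiftK d (Matrix.diagonal fun v => R v v) := by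
  ext p q
  rw [Matrix.sum_apply, Finset.sum_congr rfl fun k _ => Cmat_conj_lift k R p q,
    ← Finset.mul_sum]
  have hSk : ∑ k, (P p.1 k * P q.1 k) p.2 q.2 = (∑ k, P p.1 k * P q.1 k) p.2 q.2 :=
    (Matrix.sum_apply _ _ _ _).symm
  rw [hSk]
  by_cases h : p.1 = q.1
  · have h1 : (∑ k, P p.1 k * P q.1 k) = 1 := by
      rw [← h]
      rw [Finset.sum_congr rfl fun k _ => hidem p.1 k]
      exact hsum p.1
    rw [h1]
    simp only [LiftK, Matrix.of_apply]
    by_cases h2 : p.2 = q.2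
    · rw [if_pos h2, ← h, Matrix.diagonal_apply_eq, h2, Matrix.one_apply_eq, mul_one]
    · rw [if_neg h2, Matrix.one_apply_ne h2, mul_zero]
  · by_cases hadj : G.Adj p.1 q.1
    · have h1 : (∑ k, P p.1 k * P q.1 k) = 0 := by
        rw [Finset.sum_congr rfl fun k _ => horth p.1 q.1 hadj k]
        simp
      rw [h1]
      simp only [LiftK, Matrix.of_apply, Matrix.zero_apply, mul_zero]
      rw [Matrix.diagonal_apply_ne _ h]
      simp
    · have h1 : R p.1 q.1 = 0 := hR p.1 q.1 h hadj
      rw [h1]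
      simp only [LiftK, Matrix.of_apply, Complex.ofReal_zero, zero_mul]
      rw [Matrix.diagonal_apply_ne _ h]
      simp

end KolotilinaLift

/-- A quantum `c`-coloring of `G` in dimension `d`. -/
def IsQuantumColoring {n d c : ℕ} (G : SimpleGraph (Fin n))
    (P : Fin n → Fin c → Matrix (Fin d) (Fin d) ℂ) : Prop :=
  (∀ v k, (P v k).IsHermitian) ∧
  (∀ v k, P v k * P v k = P v k) ∧
  (∀ v, ∑ k, P v k = 1) ∧
  (∀ v w, G.Adj v w → ∀ k, P v k * P w k = 0)

/-- The Kolotilina-type bound for the quantum chromatic number: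
`c ≥ 1 + μ₁/(μ₁ − δ₁ + θ₁)` where `μ₁ = λ_max(A)`, `θ₁ = λ_max(D−A)` and
`δ₁ = λ_max(D+A)`. -/
theorem kolotilina_bound_quantum {n d c : ℕ} (hd : 0 < d)
    (G : SimpleGraph (Fin n)) [DecidableRel G.Adj]
    (hm : 1 ≤ G.edgeFinset.card)
    (hA : (G.adjMatrix ℝ).IsHermitian)
    (hL : (Matrix.diagonal (fun v => (G.degree v : ℝ)) - G.adjMatrix ℝ).IsHermitian)
    (hQ : (Matrix.diagonal (fun v => (G.degree v : ℝ)) + G.adjMatrix ℝ).IsHermitian)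
    (P : Fin n → Fin c → Matrix (Fin d) (Fin d) ℂ)
    (hP : IsQuantumColoring G P) :
    1 + (⨆ i, hA.eigenvalues i) /
        ((⨆ i, hA.eigenvalues i) - (⨆ i, hQ.eigenvalues i) + (⨆ i, hL.eigenvalues i))
      ≤ (c : ℝ) := by
  obtain ⟨hherm, hidem, hsum, horth⟩ := hP
  set μ := ⨆ i, hA.eigenvalues i with hμdef
  set δ := ⨆ i, hQ.eigenvalues i with hδdef
  set θ := ⨆ i, hL.eigenvalues i with hθdef
  -- an edge
  have hex : ∃ v w : Fin n, G.Adj v w := by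
    obtain ⟨e, he⟩ := Finset.card_pos.mp hm
    rw [SimpleGraph.mem_edgeFinset] at he
    induction e using Sym2.ind with
    | _ x y => exact ⟨x, y, he⟩
  obtain ⟨v0, w0, hadj⟩ := hex
  have hn : 0 < n := v0.pos
  have i0 : Fin d := ⟨0, hd⟩
  -- `c ≥ 2`
  have hone : (1 : Matrix (Fin d) (Fin d) ℂ) ≠ 0 := by
    intro hcon
    have := congrFun (congrFun hcon i0) i0
    simp [Matrix.one_apply] at this
  have hc2 : 2 ≤ c := by
    rcases c with _ | _ | c'
    · exfalso
      exact hone (by simpa using (hsum v0).symm)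
    · exfalso
      have h1 : P v0 0 = 1 := by simpa using hsum v0
      have h2 : P w0 0 = 1 := by simpa using hsum w0
      have h3 := horth v0 w0 hadj 0
      rw [h1, h2, one_mul] at h3
      exact hone h3
    · omega
  have hc2' : (2 : ℝ) ≤ (c : ℝ) := by exact_mod_cast hc2
  -- the top eigenvector of the signless Laplacian
  obtain ⟨y, hy1, hyQ⟩ := kol_ray_ev hn _ hQ
  set a := y ⬝ᵥ (G.adjMatrix ℝ) *ᵥ y with hadef
  set t := y ⬝ᵥ (Matrix.diagonal fun v => (G.degree v : ℝ)) *ᵥ y with htdef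
  have hta : t + a = δ := by
    have h1 : y ⬝ᵥ (Matrix.diagonal (fun v => (G.degree v : ℝ)) + G.adjMatrix ℝ) *ᵥ y = δ := by
      rw [hyQ, dotProduct_smul, smul_eq_mul, hy1, mul_one]
    rw [Matrix.add_mulVec, dotProduct_add] at h1
    exact h1
  have ha : a ≤ μ := by
    have := kol_ray_ub _ hA y
    rwa [hy1, mul_one] at this
  -- μ ≥ 0
  have hμ0 : 0 ≤ μ := by
    have hub := kol_ray_ub _ hA (Pi.single v0 1)
    have h00 : (Pi.single v0 1 : Fin n → ℝ) ⬝ᵥ (G.adjMatrix ℝ) *ᵥ Pi.single v0 1 = 0 := by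
      rw [single_dotProduct, one_mul]
      simp [Matrix.mulVec, dotProduct_single]
    have hss : (Pi.single v0 1 : Fin n → ℝ) ⬝ᵥ (Pi.single v0 1 : Fin n → ℝ) = 1 := by
      rw [dotProduct_single, mul_one, Pi.single_eq_same]
    rw [h00, hss, mul_one] at hub
    exact hub
  -- the shifted Laplacian is PSD
  have hsmul1 : ∀ x : Fin n → ℝ, x ⬝ᵥ (θ • (1 : Matrix (Fin n) (Fin n) ℝ)) *ᵥ x
      = θ * (x ⬝ᵥ x) := by
    intro x
    rw [Matrix.smul_mulVec, Matrix.one_mulVec, dotProduct_smul, smul_eq_mul]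
  set R : Matrix (Fin n) (Fin n) ℝ :=
    θ • 1 - (Matrix.diagonal (fun v => (G.degree v : ℝ)) - G.adjMatrix ℝ) with hRdef
  have hRherm : R.IsHermitian := by
    apply Matrix.IsHermitian.sub _ hL
    simp [Matrix.IsHermitian, Matrix.conjTranspose_smul]
  have hRpsd : R.PosSemidef := by
    refine Matrix.PosSemidef.of_dotProduct_mulVec_nonneg hRherm fun x => ?_
    have hub := kol_ray_ub _ hL x
    rw [show star x = x from funext fun i => star_trivial (x i)]
    rw [hRdef, Matrix.sub_mulVec, dotProduct_sub, hsmul1]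
    linarith
  obtain ⟨B, hB⟩ : ∃ B : Matrix (Fin n) (Fin n) ℝ, R = Bᴴ * B := by
    open scoped MatrixOrder Matrix.Norms.L2Operator in
    obtain ⟨B, hB⟩ := CStarAlgebra.nonneg_iff_eq_star_mul_self.mp hRpsd.nonneg
    exact ⟨B, hB⟩
  -- the pinching inequality applied to our vector
  have hpinch := kol_pinch (Cmat P) (Cmat_sum hsum) (Cmat_herm hherm) (LiftK d B)
    (fun p : Fin n × Fin d => if p.2 = i0 then (y p.1 : ℂ) else 0)
  have hXR : (LiftK d B)ᴴ * LiftK d B = LiftK d R := by rw [← liftK_mul, ← hB]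
  rw [hXR] at hpinch
  have hoff : ∀ v w, v ≠ w → ¬ G.Adj v w → R v w = 0 := by
    intro v w hvw hnadj
    simp [hRdef, Matrix.one_apply_ne hvw, Matrix.diagonal_apply_ne _ hvw,
      SimpleGraph.adjMatrix_apply, hnadj]
  rw [Cmat_pinch G hidem hsum horth R hoff] at hpinch
  rw [lift_qf R y i0, lift_qf _ y i0, Complex.ofReal_re, Complex.ofReal_re] at hpinch
  -- evaluate the two quadratic forms
  have hq1 : y ⬝ᵥ R *ᵥ y = θ - (t - a) := by
    rw [hRdef, Matrix.sub_mulVec, dotProduct_sub, hsmul1, hy1, mul_one,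
      Matrix.sub_mulVec, dotProduct_sub]
  have hdiagR : (Matrix.diagonal fun v => R v v)
      = θ • (1 : Matrix (Fin n) (Fin n) ℝ) - Matrix.diagonal (fun v => (G.degree v : ℝ)) := by
    ext i j
    by_cases h : i = j
    · subst h
      simp [hRdef, Matrix.diagonal_apply_eq, Matrix.one_apply_eq,
        SimpleGraph.adjMatrix_apply]
    · simp [Matrix.diagonal_apply_ne _ h, Matrix.one_apply_ne h]
  have hq2 : y ⬝ᵥ (Matrix.diagonal fun v => R v v) *ᵥ y = θ - t := by
    rw [hdiagR, Matrix.sub_mulVec, dotProduct_sub, hsmul1, hy1, mul_one]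
  rw [hq1, hq2] at hpinch
  -- final arithmetic
  have hkey : (c : ℝ) * (θ - t) ≥ θ - (t - a) := hpinch
  rcases lt_trichotomy (μ - δ + θ) 0 with hs | hs | hs
  · have : μ / (μ - δ + θ) ≤ 0 := div_nonpos_of_nonneg_of_nonpos hμ0 (le_of_lt hs)
    linarith
  · rw [hs, div_zero]
    linarith
  · have hfin : μ ≤ ((c : ℝ) - 1) * (μ - δ + θ) := by
      nlinarith [mul_le_mul_of_nonneg_left ha (show (0:ℝ) ≤ (c:ℝ) - 2 by linarith)]
    have hdiv : μ / (μ - δ + θ) ≤ (c : ℝ) - 1 := by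
      rw [div_le_iff₀ hs]
      linarith
    linarith
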